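/- Let (Ω, 𝒢) be a measurable space, p* a probability measure on Ω, Y : Ω → ℝ^d a measurable map, and V : Ω × ℝ → EReal jointly measurable with V(ω, ·) nondecreasing for every ω. Let γ ∈ (0,1] and let C : Ω → [0,∞] be measurable with c* := ∫⁻ C dp* < ∞, and assume that for every ω with C(ω) < ∞, every real λ ≥ 1 and every x ∈ ℝ one has V(ω, λ·x) ≤ λ^γ·(V(ω, x) + C(ω)) in EReal. Set l* := Σ_{θ ∈ {−1,1}^d} ∫⁻ (V(ω, 1 + ⟨θ, Y(ω)⟩))⁺ dp*(ω) ∈ [0,∞]. Then for every x ∈ ℝ and every h ∈ ℝ^d: ∫⁻ (V(ω, x + ⟨h, Y(ω)⟩))⁺ dp*(ω) ≤ (max(|h|, max(x,0), 1))^γ · (l* + c*), the right-hand side being computed in [0,∞]. -/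

import Mathlib

open MeasureTheory Set
open scoped ENNReal

/-- The `[0,∞]`-valued positive part `a⁺ = max(a,0)` of `a : EReal`. -/
noncomputable def ePos (a : EReal) : ℝ≥0∞ := (max a 0).abs

/-- The sign vector of `ℝ^d` associated with `s : Fin d → Bool` (coordinates `±1`). -/
noncomputable def signVec {d : ℕ} (s : Fin d → Bool) : EuclideanSpace ℝ (Fin d) :=
  WithLp.toLp 2 (fun i => if s i then (1 : ℝ) else -1)


lemma ePos_bot : ePos ⊥ = 0 := by
  simp [ePos, max_eq_right (bot_le : (⊥:EReal) ≤ 0), EReal.abs_zero]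

lemma ePos_top : ePos ⊤ = ⊤ := by
  simp [ePos, max_eq_left (le_top : (0:EReal) ≤ ⊤)]

lemma ePos_coe (x : ℝ) : ePos (x : EReal) = ENNReal.ofReal x := by
  rcases le_total x 0 with h | h
  · have : max (x : EReal) 0 = ((0:ℝ) : EReal) := by
      simp [max_eq_right, EReal.coe_le_coe_iff.2 h, h, EReal.coe_nonpos.2 h]
    simp [ePos, this, EReal.abs_def, ENNReal.ofReal_of_nonpos h]
  · have : max (x : EReal) 0 = ((x:ℝ) : EReal) := by
      simp [max_eq_left, EReal.coe_nonneg.2 h]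
    rw [ePos, this, EReal.abs_def, abs_of_nonneg h]

lemma ePos_mono {a b : EReal} (hab : a ≤ b) : ePos a ≤ ePos b := by
  match a, b with
  | _, ⊤ => simp [ePos_top]
  | ⊥, _ => simp [ePos_bot]
  | ⊤, (b : ℝ) => exact absurd hab (by simp)
  | ⊤, ⊥ => exact absurd hab (by simp)
  | (a : ℝ), ⊥ => exact absurd hab (by simp)
  | (a : ℝ), (b : ℝ) =>
    rw [ePos_coe, ePos_coe]
    exact ENNReal.ofReal_le_ofReal (EReal.coe_le_coe_iff.1 hab)

lemma ePos_coe_ennreal (c : ℝ≥0∞) : ePos (c : EReal) = c := by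
  rcases eq_or_ne c ⊤ with rfl | hc
  · rw [EReal.coe_ennreal_top, ePos_top]
  · rw [← ENNReal.ofReal_toReal hc, EReal.coe_ennreal_ofReal,
      ePos_coe, ENNReal.ofReal_eq_ofReal_iff] <;> simp [ENNReal.toReal_nonneg, le_max_left]

lemma ePos_add_le (a b : EReal) : ePos (a + b) ≤ ePos a + ePos b := by
  match a, b with
  | ⊤, b => simp [ePos_top]
  | a, ⊤ => simp [ePos_top]
  | ⊥, (b:ℝ) => simp [ePos_bot, EReal.bot_add]
  | ⊥, ⊥ => simp [ePos_bot, EReal.bot_add]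
  | (a:ℝ), ⊥ => simp [ePos_bot, EReal.add_bot]
  | (a:ℝ), (b:ℝ) =>
    rw [← EReal.coe_add, ePos_coe, ePos_coe, ePos_coe]
    exact ENNReal.ofReal_add_le

lemma ePos_coe_mul {r : ℝ} (hr : 0 ≤ r) (b : EReal) :
    ePos ((r : EReal) * b) = ENNReal.ofReal r * ePos b := by
  rcases hr.eq_or_lt with rfl | hr
  · rw [EReal.coe_zero, zero_mul, ← EReal.coe_zero, ePos_coe]
    simp
  match b with
  | ⊤ => rw [EReal.coe_mul_top_of_pos hr, ePos_top,
      ENNReal.mul_top (ENNReal.ofReal_pos.2 hr).ne']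
  | ⊥ => rw [EReal.coe_mul_bot_of_pos hr, ePos_bot, mul_zero]
  | (b:ℝ) =>
    rw [← EReal.coe_mul, ePos_coe, ePos_coe, ← ENNReal.ofReal_mul hr.le]

lemma measurable_ePos : Measurable ePos := by
  apply EReal.measurable_of_measurable_real
  simp only [ePos_coe]
  exact ENNReal.measurable_ofReal

lemma euclid_abs_apply_le {d : ℕ} (h : EuclideanSpace ℝ (Fin d)) (i : Fin d) :
    |h i| ≤ ‖h‖ := by
  rw [EuclideanSpace.norm_eq, ← Real.sqrt_sq_eq_abs]
  apply Real.sqrt_le_sqrt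
  have := Finset.single_le_sum (f := fun j => ‖h j‖ ^ 2)
    (fun j _ => sq_nonneg _) (Finset.mem_univ i)
  simpa [sq_abs] using this

lemma inner_eq_sum {d : ℕ} (a b : EuclideanSpace ℝ (Fin d)) :
    (inner ℝ a b : ℝ) = ∑ i, a i * b i := by
  simp [PiLp.inner_apply, RCLike.inner_apply, conj_trivial, mul_comm]

/-- Under the one-sided elasticity bound
`V(ω, λ·x) ≤ λ^γ·(V(ω,x) + C(ω))` (γ ∈ (0,1], `c* := ∫⁻ C dp* < ∞`), setting
`l* := Σ_{θ ∈ {−1,1}^d} ∫⁻ (V(ω, 1 + ⟨θ, Y ω⟩))⁺ dp*`, one has for all `x ∈ ℝ`, `h ∈ ℝ^d`: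
`∫⁻ (V(ω, x + ⟨h, Y ω⟩))⁺ dp* ≤ (max(|h|, x⁺, 1))^γ · (l* + c*)`. -/
theorem pos_part_lintegral_bound {Ω : Type*} [MeasurableSpace Ω] {d : ℕ}
    (p : Measure Ω) [IsProbabilityMeasure p]
    (Y : Ω → EuclideanSpace ℝ (Fin d)) (hY : Measurable Y)
    (V : Ω → ℝ → EReal) (hVmeas : Measurable (Function.uncurry V))
    (hVmono : ∀ ω, Monotone (V ω))
    (γ : ℝ) (hγ0 : 0 < γ) (hγ1 : γ ≤ 1)
    (C : Ω → ℝ≥0∞) (hCmeas : Measurable C) (hCfin : (∫⁻ ω, C ω ∂p) < ⊤)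
    (hgrow : ∀ ω, C ω < ⊤ → ∀ lam : ℝ, 1 ≤ lam → ∀ x : ℝ,
      V ω (lam * x) ≤ ((lam ^ γ : ℝ) : EReal) * (V ω x + (C ω : EReal))) :
    ∀ x : ℝ, ∀ h : EuclideanSpace ℝ (Fin d),
      (∫⁻ ω, ePos (V ω (x + (inner ℝ h (Y ω) : ℝ))) ∂p)
        ≤ ENNReal.ofReal ((max (max ‖h‖ (max x 0)) 1) ^ γ)
          * ((∑ s : Fin d → Bool, ∫⁻ ω, ePos (V ω (1 + (inner ℝ (signVec s) (Y ω) : ℝ))) ∂p)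
            + ∫⁻ ω, C ω ∂p) := by
  intro x h
  set L : ℝ := max (max ‖h‖ (max x 0)) 1 with hLdef
  have hL1 : (1:ℝ) ≤ L := le_max_right _ _
  have hL0 : (0:ℝ) ≤ L := zero_le_one.trans hL1
  have hLγ : 0 ≤ L ^ γ := Real.rpow_nonneg hL0 γ
  have hmeas : ∀ s : Fin d → Bool,
      Measurable fun ω => ePos (V ω (1 + (inner ℝ (signVec s) (Y ω) : ℝ))) := by
    intro s
    have h1 : Measurable fun ω => 1 + (inner ℝ (signVec s) (Y ω) : ℝ) := by
      have : Continuous fun y : EuclideanSpace ℝ (Fin d) => 1 + (inner ℝ (signVec s) y : ℝ) :=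
        continuous_const.add (Continuous.inner continuous_const continuous_id)
      exact this.measurable.comp hY
    exact measurable_ePos.comp (hVmeas.comp (measurable_id.prodMk h1))
  have key : ∀ ω, C ω ≠ ⊤ →
      ePos (V ω (x + (inner ℝ h (Y ω) : ℝ)))
        ≤ ENNReal.ofReal (L ^ γ) *
          ((∑ s : Fin d → Bool, ePos (V ω (1 + (inner ℝ (signVec s) (Y ω) : ℝ)))) + C ω) := by
    intro ω hC
    set θ : Fin d → Bool := fun i => decide (0 ≤ Y ω i) with hθ
    set t : ℝ := (inner ℝ (signVec θ) (Y ω) : ℝ) with htdef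
    have htsum : t = ∑ i, |Y ω i| := by
      rw [htdef, inner_eq_sum]
      refine Finset.sum_congr rfl fun i _ => ?_
      by_cases hi : 0 ≤ Y ω i
      · simp [signVec, hθ, hi, abs_of_nonneg hi]
      · simp [signVec, hθ, hi, abs_of_neg (not_le.1 hi)]
    have ht0 : 0 ≤ t := by rw [htsum]; positivity
    have hxt : x + (inner ℝ h (Y ω) : ℝ) ≤ L * (1 + t) := by
      have h1 : x ≤ L := ((le_max_left x 0).trans (le_max_right ‖h‖ _)).trans (le_max_left _ 1)
      have hh : ‖h‖ ≤ L := (le_max_left _ _).trans (le_max_left _ 1)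
      have h2 : (inner ℝ h (Y ω) : ℝ) ≤ L * t := by
        rw [htsum, inner_eq_sum, Finset.mul_sum]
        refine Finset.sum_le_sum fun i _ => ?_
        calc h i * Y ω i ≤ |h i * Y ω i| := le_abs_self _
          _ = |h i| * |Y ω i| := abs_mul _ _
          _ ≤ L * |Y ω i| :=
            mul_le_mul_of_nonneg_right ((euclid_abs_apply_le h i).trans hh) (abs_nonneg _)
      calc x + (inner ℝ h (Y ω) : ℝ) ≤ L + L * t := add_le_add h1 h2
        _ = L * (1 + t) := by ring
    have hV1 : V ω (x + (inner ℝ h (Y ω) : ℝ)) ≤ ((L ^ γ : ℝ) : EReal) * (V ω (1 + t) + (C ω : EReal)) :=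
      le_trans (hVmono ω hxt) (hgrow ω hC.lt_top L hL1 (1 + t))
    calc ePos (V ω (x + (inner ℝ h (Y ω) : ℝ)))
        ≤ ePos (((L ^ γ : ℝ) : EReal) * (V ω (1 + t) + (C ω : EReal))) := ePos_mono hV1
      _ = ENNReal.ofReal (L ^ γ) * ePos (V ω (1 + t) + (C ω : EReal)) := ePos_coe_mul hLγ _
      _ ≤ ENNReal.ofReal (L ^ γ) * (ePos (V ω (1 + t)) + C ω) :=
          mul_le_mul_right ((ePos_add_le _ _).trans_eq (by rw [ePos_coe_ennreal])) _
      _ ≤ ENNReal.ofReal (L ^ γ) *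
          ((∑ s : Fin d → Bool, ePos (V ω (1 + (inner ℝ (signVec s) (Y ω) : ℝ)))) + C ω) := by
          refine mul_le_mul_right (add_le_add ?_ (le_refl _)) _
          exact Finset.single_le_sum
            (f := fun s => ePos (V ω (1 + (inner ℝ (signVec s) (Y ω) : ℝ))))
            (fun s _ => zero_le) (Finset.mem_univ θ)
  have hae : ∀ᵐ ω ∂p, ePos (V ω (x + (inner ℝ h (Y ω) : ℝ)))
      ≤ ENNReal.ofReal (L ^ γ) *
        ((∑ s : Fin d → Bool, ePos (V ω (1 + (inner ℝ (signVec s) (Y ω) : ℝ)))) + C ω) :=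
    (ae_lt_top hCmeas hCfin.ne).mono fun ω hω => key ω hω.ne
  calc (∫⁻ ω, ePos (V ω (x + (inner ℝ h (Y ω) : ℝ))) ∂p)
      ≤ ∫⁻ ω, ENNReal.ofReal (L ^ γ) *
          ((∑ s : Fin d → Bool, ePos (V ω (1 + (inner ℝ (signVec s) (Y ω) : ℝ)))) + C ω) ∂p :=
        lintegral_mono_ae hae
    _ = ENNReal.ofReal (L ^ γ) * ∫⁻ ω,
          ((∑ s : Fin d → Bool, ePos (V ω (1 + (inner ℝ (signVec s) (Y ω) : ℝ)))) + C ω) ∂p :=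
        lintegral_const_mul' _ _ ENNReal.ofReal_ne_top
    _ = ENNReal.ofReal (L ^ γ) *
          ((∑ s : Fin d → Bool, ∫⁻ ω, ePos (V ω (1 + (inner ℝ (signVec s) (Y ω) : ℝ))) ∂p)
            + ∫⁻ ω, C ω ∂p) := by
        rw [lintegral_add_right _ hCmeas, lintegral_finset_sum _ fun s _ => hmeas s]
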